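/- Assume additionally b₁ ≠ 0. Then as r ↓ 0: p₂^{(r)}(ℓ₁^{(r)})/p₁^{(r)}(ℓ₁^{(r)}) → 1; p₃^{(r)}(ℓ₁^{(r)}+1)/p₁^{(r)}(ℓ₁^{(r)}) → (λ₁+λ₂)/λ₂; and p₁^{(r)}(0)/p₁^{(r)}(ℓ₁^{(r)}) → ((λ₁+λ₂)/λ₂)·exp(β₁·ℓ₁). -/

import Mathlib

open Filter Set

private noncomputable def logF (x : ℝ) : ℝ := if x = 0 then 1 else Real.log (1+x) / x

private lemma logF_eq (x : ℝ) : Real.log (1 + x) = x * logF x := by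
  unfold logF
  split_ifs with h
  · simp [h]
  · field_simp

private lemma logF_tendsto : Tendsto logF (nhds 0) (nhds 1) := by
  rw [← nhdsNE_sup_pure (0:ℝ), tendsto_sup]
  constructor
  · have hd : HasDerivAt Real.log 1 1 := by simpa using Real.hasDerivAt_log one_ne_zero
    have hs := hasDerivAt_iff_tendsto_slope.mp hd
    have hmap : Tendsto (fun x : ℝ => 1 + x) (nhdsWithin 0 {(0:ℝ)}ᶜ) (nhdsWithin 1 {(1:ℝ)}ᶜ) := by
      rw [tendsto_nhdsWithin_iff]
      constructor
      · have : Tendsto (fun x : ℝ => 1 + x) (nhds 0) (nhds (1+0)) :=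
          tendsto_const_nhds.add tendsto_id
        simpa using this.mono_left nhdsWithin_le_nhds
      · filter_upwards [self_mem_nhdsWithin] with x hx
        simp only [mem_compl_iff, mem_singleton_iff] at hx ⊢
        intro h; exact hx (by linarith)
    have := hs.comp hmap
    apply this.congr'
    filter_upwards [self_mem_nhdsWithin] with x hx
    simp only [mem_compl_iff, mem_singleton_iff] at hx
    simp only [Function.comp, logF, if_neg hx, slope_def_field, Real.log_one]
    ring_nf
  · have : logF 0 = 1 := by simp [logF]
    rw [← this]
    exact tendsto_pure_nhds logF 0

private lemma queue_key (lam1 lam2 a c2m : ℝ) (L : ℕ) (p1 p2 p3 : ℕ → ℝ)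
    (hlam1 : 0 < lam1) (hlam2 : 0 < lam2) (ha : 0 < a) (hc2m : 0 < c2m)
    (hL : 1 ≤ L) (hp1L : 0 < p1 L)
    (hq1 : lam1 * p1 0 = a * p1 1)
    (hq2 : ∀ ℓ, 1 ≤ ℓ → ℓ + 1 ≤ L →
      (lam1 + a) * p1 ℓ = lam1 * p1 (ℓ - 1) + a * p1 (ℓ + 1) + lam2 * p2 (ℓ - 1))
    (hq3 : (lam1 + a) * p1 L = lam1 * p1 (L - 1) + lam2 * p2 (L - 1))
    (hq4 : lam2 * p2 0 = a * p2 1)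
    (hq5 : ∀ ℓ, 1 ≤ ℓ → ℓ + 1 ≤ L → (lam2 + a) * p2 ℓ = a * p2 (ℓ + 1))
    (hq6 : (lam2 + a) * p2 L = c2m * p3 (L + 1)) :
    p2 L / p1 L = lam1 / a ∧
    p3 (L + 1) / p1 L = (lam2 + a) * lam1 / (c2m * a) ∧
    p1 0 / p1 L = (∑ j ∈ Finset.range L, (lam1 / (lam2 + a)) ^ j) / (lam1 / a) ^ L := by
  obtain ⟨m, rfl⟩ : ∃ m, L = m + 1 := ⟨L - 1, by omega⟩
  have ha' : a ≠ 0 := ha.ne'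
  have hla : (0:ℝ) < lam2 + a := by linarith
  have hla' : lam2 + a ≠ 0 := hla.ne'
  obtain ⟨σ, hσdef⟩ : ∃ x : ℝ, x = (lam2 + a) / a := ⟨_, rfl⟩
  obtain ⟨ρ, hρdef⟩ : ∃ x : ℝ, x = lam1 / a := ⟨_, rfl⟩
  obtain ⟨t, htdef⟩ : ∃ x : ℝ, x = lam1 / (lam2 + a) := ⟨_, rfl⟩
  have hσa : σ * a = lam2 + a := by rw [hσdef]; field_simp
  have hρa : ρ * a = lam1 := by rw [hρdef]; field_simp
  have hst : σ * t = ρ := by rw [hσdef, htdef, hρdef]; field_simp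
  have hσpos : 0 < σ := hσdef ▸ div_pos hla ha
  have hρpos : 0 < ρ := hρdef ▸ div_pos hlam1 ha
  have hS : ∀ k, k ≤ m → (∑ j ∈ Finset.range (k+1), p2 j) = σ^k * p2 0 ∧
      a * p2 (k+1) = lam2 * (σ^k * p2 0) := by
    intro k
    induction k with
    | zero =>
      intro _
      refine ⟨by simp, by simpa using hq4.symm⟩
    | succ k ih =>
      intro hk
      obtain ⟨ih1, ih2⟩ := ih (by omega)
      constructor
      · rw [Finset.sum_range_succ, ih1]
        refine mul_left_cancel₀ ha' ?_
        linear_combination ih2 - σ^k * p2 0 * hσa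
      · have h5 := hq5 (k+1) (by omega) (by omega)
        refine mul_left_cancel₀ ha' ?_
        linear_combination -a * h5 + (lam2+a) * ih2 - lam2 * σ^k * p2 0 * hσa
  have hP1 : ∀ k, k + 1 ≤ m + 1 →
      a * p1 (k+1) = lam1 * p1 k - lam2 * ∑ j ∈ Finset.range k, p2 j := by
    intro k
    induction k with
    | zero => intro _; simpa using hq1.symm
    | succ k ih =>
      intro hk
      have ihk := ih (by omega)
      have h2 := hq2 (k+1) (by omega) (by omega)
      simp only [Nat.add_sub_cancel] at h2
      rw [Finset.sum_range_succ]
      linear_combination ihk - h2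
  have hEnd : lam1 * p1 (m+1) = lam2 * (σ^m * p2 0) := by
    have h3 := hq3
    simp only [Nat.add_sub_cancel] at h3
    have hp := hP1 m le_rfl
    have hs := (hS m le_rfl).1
    rw [Finset.sum_range_succ] at hs
    linear_combination h3 - hp + lam2 * hs
  have hi : a * p2 (m+1) = lam1 * p1 (m+1) := by
    rw [(hS m le_rfl).2, ← hEnd]
  refine ⟨?_, ?_, ?_⟩
  · rw [div_eq_div_iff hp1L.ne' ha']
    linear_combination hi
  · rw [div_eq_div_iff hp1L.ne' (mul_pos hc2m ha).ne']
    linear_combination (lam2+a) * hi - a * hq6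
  · have hCF : ∀ k, k + 1 ≤ m + 1 →
        a * p1 (k+1) = ρ^(k+1) * (a * p1 0)
          - lam2 * p2 0 * ∑ j ∈ Finset.range k, ρ^j * σ^(k-1-j) := by
      intro k
      induction k with
      | zero =>
        intro _
        simp only [Finset.range_zero, Finset.sum_empty, pow_one]
        linear_combination -hq1 - p1 0 * hρa
      | succ k ih =>
        intro hk
        have ihk := ih (by omega)
        have hp := hP1 (k+1) hk
        have hs := (hS k (by omega)).1
        rw [hs] at hp
        simp only [Nat.add_sub_cancel]
        have hsplit : (∑ j ∈ Finset.range (k+1), ρ^j * σ^(k - j))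
            = ρ * (∑ j ∈ Finset.range k, ρ^j * σ^(k-1-j)) + σ^k := by
          rw [Finset.sum_range_succ', Finset.mul_sum]
          congr 1
          · exact Finset.sum_congr rfl fun j hj => by
              have hje : k - (j+1) = k - 1 - j := by omega
              rw [hje]; ring
          · simp
        rw [hsplit]
        linear_combination hp + ρ * ihk - p1 (k+1) * hρa
    have hcf := hCF m le_rfl
    have hTS : lam1 * ∑ j ∈ Finset.range m, ρ^j * σ^(m-1-j)
        = a * σ^m * (t * ∑ j ∈ Finset.range m, t^j) := by
      rw [Finset.mul_sum, Finset.mul_sum, Finset.mul_sum]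
      refine Finset.sum_congr rfl ?_
      intro j hj
      simp only [Finset.mem_range] at hj
      have hσsplit : σ^m = σ^(m-1-j) * σ^(j+1) := by
        rw [← pow_add]; congr 1; omega
      calc lam1 * (ρ^j * σ^(m-1-j)) = σ^(m-1-j) * ((ρ * a) * ρ^j) := by
            rw [hρa]; ring
        _ = σ^(m-1-j) * (a * (σ * t)^(j+1)) := by rw [hst, pow_succ]; ring
        _ = a * σ^m * (t * t^j) := by
            rw [mul_pow, hσsplit, pow_succ, pow_succ]; ring
    rw [← hρdef, ← htdef, div_eq_div_iff hp1L.ne' (pow_pos hρpos _).ne', geom_sum_succ]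
    refine mul_left_cancel₀
      (show a * σ^m * lam1 ≠ 0 from (mul_pos (mul_pos ha (pow_pos hσpos m)) hlam1).ne') ?_
    linear_combination (-(σ^m * lam1)) * hcf + (σ^m * lam2 * p2 0) * hTS
      + (-(a * σ^m * (t * ∑ j ∈ Finset.range m, t^j))) * hEnd

theorem stmt14
    (lam1 lam2 c1 c2 mu : ℝ → ℝ) (ell : ℝ → ℕ) (p1 p2 p3 : ℝ → ℕ → ℝ)
    (lam1L lam2L c1L c2L muL b1 b2 ℓ₁ β1 β2 : ℝ)
    (hpos : ∀ r ∈ Set.Ioc (0:ℝ) 1,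
      0 < lam1 r ∧ 0 < lam2 r ∧ 0 < c1 r ∧ 0 < c2 r ∧ 0 < mu r ∧ 1 ≤ ell r)
    (hp1pos : ∀ r ∈ Set.Ioc (0:ℝ) 1, ∀ ℓ ≤ ell r, 0 < p1 r ℓ)
    (hp2pos : ∀ r ∈ Set.Ioc (0:ℝ) 1, ∀ ℓ ≤ ell r, 0 < p2 r ℓ)
    (hp3pos : ∀ r ∈ Set.Ioc (0:ℝ) 1, ∀ ℓ, ell r + 1 ≤ ℓ → 0 < p3 r ℓ)
    (hbal1 : ∀ r ∈ Set.Ioc (0:ℝ) 1, lam1 r * p1 r 0 = c1 r * mu r * p1 r 1)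
    (hbal2 : ∀ r ∈ Set.Ioc (0:ℝ) 1, ∀ ℓ, 1 ≤ ℓ → ℓ ≤ ell r - 1 →
      (lam1 r + c1 r * mu r) * p1 r ℓ
        = lam1 r * p1 r (ℓ - 1) + c1 r * mu r * p1 r (ℓ + 1) + lam2 r * p2 r (ℓ - 1))
    (hbal3 : ∀ r ∈ Set.Ioc (0:ℝ) 1,
      (lam1 r + c1 r * mu r) * p1 r (ell r)
        = lam1 r * p1 r (ell r - 1) + lam2 r * p2 r (ell r - 1))
    (hbal4 : ∀ r ∈ Set.Ioc (0:ℝ) 1, lam2 r * p2 r 0 = c1 r * mu r * p2 r 1)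
    (hbal5 : ∀ r ∈ Set.Ioc (0:ℝ) 1, ∀ ℓ, 1 ≤ ℓ → ℓ ≤ ell r - 1 →
      (lam2 r + c1 r * mu r) * p2 r ℓ = c1 r * mu r * p2 r (ℓ + 1))
    (hbal6 : ∀ r ∈ Set.Ioc (0:ℝ) 1,
      (lam2 r + c1 r * mu r) * p2 r (ell r) = c2 r * mu r * p3 r (ell r + 1))
    (hbal7 : ∀ r ∈ Set.Ioc (0:ℝ) 1,
      (lam2 r + c2 r * mu r) * p3 r (ell r + 1)
        = lam1 r * p1 r (ell r) + lam2 r * p2 r (ell r) + c2 r * mu r * p3 r (ell r + 2))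
    (hbal8 : ∀ r ∈ Set.Ioc (0:ℝ) 1, ∀ ℓ, ell r + 1 ≤ ℓ →
      lam2 r * p3 r ℓ = c2 r * mu r * p3 r (ℓ + 1))
    (hnorm : ∀ r ∈ Set.Ioc (0:ℝ) 1,
      (∑ ℓ ∈ Finset.range (ell r + 1), p1 r ℓ)
        + (∑ ℓ ∈ Finset.range (ell r + 1), p2 r ℓ)
        + (∑' n : ℕ, p3 r (ell r + 1 + n)) = 1)
    (hstable : ∀ r ∈ Set.Ioc (0:ℝ) 1, lam2 r < c2 r * mu r)
    (hlam1lim : Filter.Tendsto lam1 (nhdsWithin 0 (Set.Ioi 0)) (nhds lam1L))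
    (hlam2lim : Filter.Tendsto lam2 (nhdsWithin 0 (Set.Ioi 0)) (nhds lam2L))
    (hc1lim : Filter.Tendsto c1 (nhdsWithin 0 (Set.Ioi 0)) (nhds c1L))
    (hc2lim : Filter.Tendsto c2 (nhdsWithin 0 (Set.Ioi 0)) (nhds c2L))
    (hmulim : Filter.Tendsto mu (nhdsWithin 0 (Set.Ioi 0)) (nhds muL))
    (hlam1L : 0 < lam1L) (hlam2L : 0 < lam2L) (hc1L : 0 < c1L) (hc2L : 0 < c2L)
    (hmuL : 0 < muL)
    (hhv1 : Filter.Tendsto (fun r => (c1 r * mu r - lam1 r - r * mu r * b1) / r)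
      (nhdsWithin 0 (Set.Ioi 0)) (nhds 0))
    (hhv2 : Filter.Tendsto (fun r => (c2 r * mu r - lam2 r - r * mu r * b2) / r)
      (nhdsWithin 0 (Set.Ioi 0)) (nhds 0))
    (hb2 : 0 < b2)
    (helllim : Filter.Tendsto (fun r => (r * (ell r : ℝ) - ℓ₁) / r)
      (nhdsWithin 0 (Set.Ioi 0)) (nhds 0))
    (hℓ₁ : 0 < ℓ₁)
    (hβ1 : β1 = b1 / c1L) (hβ2 : β2 = b2 / c2L)
    (hb1 : b1 ≠ 0) :
    Filter.Tendsto (fun r => p2 r (ell r) / p1 r (ell r))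
        (nhdsWithin 0 (Set.Ioi 0)) (nhds 1)
    ∧ Filter.Tendsto (fun r => p3 r (ell r + 1) / p1 r (ell r))
        (nhdsWithin 0 (Set.Ioi 0)) (nhds ((lam1L + lam2L) / lam2L))
    ∧ Filter.Tendsto (fun r => p1 r 0 / p1 r (ell r))
        (nhdsWithin 0 (Set.Ioi 0))
        (nhds ((lam1L + lam2L) / lam2L * Real.exp (β1 * ℓ₁))) := by
  set l : Filter ℝ := nhdsWithin 0 (Set.Ioi 0) with hldef
  have hev : ∀ᶠ r in l, r ∈ Set.Ioc (0:ℝ) 1 := Ioc_mem_nhdsGT_of_mem ⟨le_refl 0, zero_lt_one⟩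
  have hrpos : ∀ᶠ r in l, 0 < r := eventually_mem_nhdsWithin
  have hrne : ∀ᶠ r in l, r ≠ 0 := hrpos.mono fun r hr => hr.ne'
  have hid0 : Tendsto (fun r : ℝ => r) l (nhds 0) := tendsto_id.mono_left nhdsWithin_le_nhds
  have hal : Tendsto (fun r => c1 r * mu r) l (nhds (c1L * muL)) := hc1lim.mul hmulim
  have hg1 : Tendsto (fun r => (c1 r * mu r - lam1 r) / r) l (nhds (muL * b1)) := by
    have h := hhv1.add (hmulim.mul_const b1)
    rw [zero_add] at h
    apply h.congr'
    filter_upwards [hrne] with r hr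
    field_simp
    ring
  have hEq1 : c1L * muL = lam1L := by
    have hzero : Tendsto (fun r => c1 r * mu r - lam1 r) l (nhds 0) := by
      have h := hg1.mul hid0
      rw [mul_zero] at h
      apply h.congr'
      filter_upwards [hrne] with r hr
      field_simp
    have hsub : Tendsto (fun r => c1 r * mu r - lam1 r) l (nhds (c1L * muL - lam1L)) :=
      hal.sub hlam1lim
    have := tendsto_nhds_unique hsub hzero
    linarith
  have hEq2 : c2L * muL = lam2L := by
    have hg2 : Tendsto (fun r => (c2 r * mu r - lam2 r) / r) l (nhds (muL * b2)) := by
      have h := hhv2.add (hmulim.mul_const b2)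
      rw [zero_add] at h
      apply h.congr'
      filter_upwards [hrne] with r hr
      field_simp
      ring
    have hzero : Tendsto (fun r => c2 r * mu r - lam2 r) l (nhds 0) := by
      have h := hg2.mul hid0
      rw [mul_zero] at h
      apply h.congr'
      filter_upwards [hrne] with r hr
      field_simp
    have hsub : Tendsto (fun r => c2 r * mu r - lam2 r) l (nhds (c2L * muL - lam2L)) :=
      (hc2lim.mul hmulim).sub hlam2lim
    have := tendsto_nhds_unique hsub hzero
    linarith
  have hrL : Tendsto (fun r => r * (ell r : ℝ)) l (nhds ℓ₁) := by
    have h1 : Tendsto (fun r => r * (ell r : ℝ) - ℓ₁) l (nhds 0) := by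
      have h := helllim.mul hid0
      rw [mul_zero] at h
      apply h.congr'
      filter_upwards [hrne] with r hr
      field_simp
    have := h1.add_const ℓ₁
    rw [zero_add] at this
    simpa using this
  have hellR : Tendsto (fun r => (ell r : ℝ)) l atTop := by
    have hinv : Tendsto (fun r : ℝ => r⁻¹) l atTop := tendsto_inv_nhdsGT_zero
    have h := hrL.pos_mul_atTop hℓ₁ hinv
    apply h.congr'
    filter_upwards [hrne] with r hr
    field_simp
  have hellN : Tendsto ell l atTop := tendsto_natCast_atTop_iff.mp hellR
  -- the key exact identities
  have hkey : ∀ᶠ r in l,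
      p2 r (ell r) / p1 r (ell r) = lam1 r / (c1 r * mu r) ∧
      p3 r (ell r + 1) / p1 r (ell r)
        = (lam2 r + c1 r * mu r) * lam1 r / (c2 r * mu r * (c1 r * mu r)) ∧
      p1 r 0 / p1 r (ell r)
        = (∑ j ∈ Finset.range (ell r), (lam1 r / (lam2 r + c1 r * mu r)) ^ j)
          / (lam1 r / (c1 r * mu r)) ^ (ell r) := by
    filter_upwards [hev] with r hr
    obtain ⟨h1, h2, h3, h4, h5, h6⟩ := hpos r hr
    exact queue_key (lam1 r) (lam2 r) (c1 r * mu r) (c2 r * mu r) (ell r)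
      (p1 r) (p2 r) (p3 r) h1 h2 (mul_pos h3 h5) (mul_pos h4 h5) h6
      (hp1pos r hr _ le_rfl) (hbal1 r hr)
      (fun ℓ hℓ1 hℓ2 => hbal2 r hr ℓ hℓ1 (by omega))
      (hbal3 r hr) (hbal4 r hr)
      (fun ℓ hℓ1 hℓ2 => hbal5 r hr ℓ hℓ1 (by omega))
      (hbal6 r hr)
  -- limit of t
  have hden : (0:ℝ) < lam2L + lam1L := by linarith
  have ht : Tendsto (fun r => lam1 r / (lam2 r + c1 r * mu r)) l
      (nhds (lam1L / (lam2L + lam1L))) := by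
    have := hlam1lim.div (hlam2lim.add hal) (by rw [hEq1]; exact hden.ne')
    rwa [hEq1] at this
  have htinf_pos : 0 < lam1L / (lam2L + lam1L) := div_pos hlam1L hden
  have htinf_lt1 : lam1L / (lam2L + lam1L) < 1 := by
    rw [div_lt_one hden]; linarith
  -- t^L → 0
  have htpow : Tendsto (fun r => (lam1 r / (lam2 r + c1 r * mu r)) ^ (ell r)) l (nhds 0) := by
    set q : ℝ := (lam1L / (lam2L + lam1L) + 1) / 2 with hqdef
    have hq0 : 0 ≤ q := by positivity
    have hq1 : q < 1 := by rw [hqdef]; linarith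
    have hqgt : lam1L / (lam2L + lam1L) < q := by rw [hqdef]; linarith
    have hle : ∀ᶠ r in l, lam1 r / (lam2 r + c1 r * mu r) ≤ q :=
      (ht.eventually_lt_const hqgt).mono fun r hr => hr.le
    have hge : ∀ᶠ r in l, 0 ≤ lam1 r / (lam2 r + c1 r * mu r) := by
      filter_upwards [hev] with r hr
      obtain ⟨h1, h2, h3, h4, h5, _⟩ := hpos r hr
      positivity
    have hgq : Tendsto (fun r => q ^ (ell r)) l (nhds 0) :=
      (tendsto_pow_atTop_nhds_zero_of_lt_one hq0 hq1).comp hellN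
    refine squeeze_zero' ?_ ?_ hgq
    · filter_upwards [hge] with r hr; positivity
    · filter_upwards [hge, hle] with r hr1 hr2
      exact pow_le_pow_left₀ hr1 hr2 _
  -- geometric sum limit
  have hgeom : Tendsto
      (fun r => ∑ j ∈ Finset.range (ell r), (lam1 r / (lam2 r + c1 r * mu r)) ^ j) l
      (nhds ((0 - 1) / (lam1L / (lam2L + lam1L) - 1))) := by
    have hne : ∀ᶠ r in l, lam1 r / (lam2 r + c1 r * mu r) ≠ 1 :=
      (ht.eventually_lt_const htinf_lt1).mono fun r hr => hr.ne
    have hlim := (htpow.sub_const 1).div (ht.sub_const 1)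
      (by intro h; have := sub_eq_zero.mp h; linarith [htinf_lt1, this])
    apply hlim.congr'
    filter_upwards [hne] with r hr
    simp only [Pi.div_apply]
    rw [geom_sum_eq hr]
  -- rho^L limit
  have hρL : Tendsto (fun r => (lam1 r / (c1 r * mu r)) ^ (ell r)) l
      (nhds (Real.exp (-(β1 * ℓ₁)))) := by
    have hur : Tendsto (fun r => ((c1 r * mu r - lam1 r) / r) / lam1 r) l
        (nhds (muL * b1 / lam1L)) := hg1.div hlam1lim hlam1L.ne'
    have hu0 : Tendsto (fun r => (c1 r * mu r - lam1 r) / lam1 r) l (nhds 0) := by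
      have h := hur.mul hid0
      rw [mul_zero] at h
      apply h.congr'
      filter_upwards [hrne, hev] with r hr hr2
      obtain ⟨h1, _, _, _, _, _⟩ := hpos r hr2
      field_simp
    have hF : Tendsto (fun r => logF ((c1 r * mu r - lam1 r) / lam1 r)) l (nhds 1) :=
      logF_tendsto.comp hu0
    have hlog : Tendsto (fun r => (ell r : ℝ) * Real.log (lam1 r / (c1 r * mu r))) l
        (nhds (-(ℓ₁ * (muL * b1 / lam1L * 1)))) := by
      have h := (hrL.mul (hur.mul hF)).neg
      apply h.congr'
      filter_upwards [hrne, hev] with r hr hr2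
      obtain ⟨h1, _, h3, _, h5, _⟩ := hpos r hr2
      have ha0 : (0:ℝ) < c1 r * mu r := mul_pos h3 h5
      have hlam1r : lam1 r ≠ 0 := h1.ne'
      have hrw : lam1 r / (c1 r * mu r) = ((c1 r * mu r) / lam1 r)⁻¹ := by
        rw [inv_div]
      have hrw2 : (c1 r * mu r) / lam1 r = 1 + (c1 r * mu r - lam1 r) / lam1 r := by
        field_simp
        ring
      rw [hrw, Real.log_inv, hrw2, logF_eq]
      field_simp
    have hval : -(ℓ₁ * (muL * b1 / lam1L * 1)) = -(β1 * ℓ₁) := by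
      rw [hβ1, ← hEq1]
      field_simp
    rw [hval] at hlog
    have hexp := (Real.continuous_exp.tendsto _).comp hlog
    apply hexp.congr'
    filter_upwards [hev] with r hr
    obtain ⟨h1, _, h3, _, h5, _⟩ := hpos r hr
    have hρr : 0 < lam1 r / (c1 r * mu r) := div_pos h1 (mul_pos h3 h5)
    simp only [Function.comp]
    rw [← Real.log_pow, Real.exp_log (pow_pos hρr _)]
  -- conclusion 1
  refine ⟨?_, ?_, ?_⟩
  · have hlim : Tendsto (fun r => lam1 r / (c1 r * mu r)) l (nhds (lam1L / (c1L * muL))) :=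
      hlam1lim.div hal (by rw [hEq1]; exact hlam1L.ne')
    rw [hEq1, div_self hlam1L.ne'] at hlim
    apply hlim.congr'
    filter_upwards [hkey] with r hr
    exact hr.1.symm
  · have hlim : Tendsto
        (fun r => (lam2 r + c1 r * mu r) * lam1 r / (c2 r * mu r * (c1 r * mu r))) l
        (nhds ((lam2L + c1L * muL) * lam1L / (c2L * muL * (c1L * muL)))) :=
      ((hlam2lim.add hal).mul hlam1lim).div ((hc2lim.mul hmulim).mul hal)
        (by rw [hEq1, hEq2]; positivity)
    have hval : (lam2L + c1L * muL) * lam1L / (c2L * muL * (c1L * muL))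
        = (lam1L + lam2L) / lam2L := by
      rw [hEq1, hEq2]
      field_simp
      ring
    rw [hval] at hlim
    apply hlim.congr'
    filter_upwards [hkey] with r hr
    exact hr.2.1.symm
  · have hlim := hgeom.div hρL (Real.exp_pos _).ne'
    have hval : (0 - 1) / (lam1L / (lam2L + lam1L) - 1) / Real.exp (-(β1 * ℓ₁))
        = (lam1L + lam2L) / lam2L * Real.exp (β1 * ℓ₁) := by
      rw [Real.exp_neg, div_inv_eq_mul]
      rw [show lam1L / (lam2L + lam1L) - 1 = -lam2L / (lam2L + lam1L) by field_simp; ring]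
      rw [div_div_eq_mul_div, div_mul_eq_mul_div,
        div_eq_iff (by simpa using hlam2L.ne' : -lam2L ≠ 0)]
      field_simp
      ring
    rw [hval] at hlim
    apply hlim.congr'
    filter_upwards [hkey] with r hr
    exact hr.2.2.symm
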